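/- Let p ≥ 2 be a real number, let n be a positive integer, and let a₁, …, aₙ be positive real numbers. Then ((1/n)·Σₖ aₖ)^p ≤ (1/n)·Σₖ aₖ^p − (1/n)·Σₖ | aₖ − (1/n)·Σⱼ aⱼ |^p. -/

import Mathlib

open scoped InnerProductSpace
open ContinuousLinearMap

variable {H : Type*} [NormedAddCommGroup H] [InnerProductSpace ℂ H]
  [CompleteSpace H] [Nontrivial H]

/-- The numerical radius of a bounded linear operator. -/
noncomputable def numRad (A : H →L[ℂ] H) : ℝ :=
  ⨆ x : {x : H // ‖x‖ = 1}, ‖⟪A x.1, x.1⟫_ℂ‖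

/-- The Crawford number of a bounded linear operator. -/
noncomputable def crawford (A : H →L[ℂ] H) : ℝ :=
  ⨅ x : {x : H // ‖x‖ = 1}, ‖⟪A x.1, x.1⟫_ℂ‖

/-- The Euclidean operator radius of a pair of bounded linear operators. -/
noncomputable def euclRad (B C : H →L[ℂ] H) : ℝ :=
  ⨆ x : {x : H // ‖x‖ = 1}, Real.sqrt (‖⟪B x.1, x.1⟫_ℂ‖ ^ 2 + ‖⟪C x.1, x.1⟫_ℂ‖ ^ 2)

/-- The absolute value `|A| = (A*A)^(1/2)` of a bounded linear operator. -/
noncomputable def opAbs (A : H →L[ℂ] H) : H →L[ℂ] H := CFC.sqrt (adjoint A * A)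

/-- The real part `Re(A) = (A + A*)/2` of a bounded linear operator. -/
noncomputable def reOp (A : H →L[ℂ] H) : H →L[ℂ] H := (2 : ℂ)⁻¹ • (A + adjoint A)

/-- The imaginary part `Im(A) = (A - A*)/(2i)` of a bounded linear operator. -/
noncomputable def imOp (A : H →L[ℂ] H) : H →L[ℂ] H := (2 * Complex.I)⁻¹ • (A - adjoint A)

lemma auxSup {x y p : ℝ} (hx : 0 ≤ x) (hy : 0 ≤ y) (hp : 1 ≤ p) :
    x ^ p + y ^ p ≤ (x + y) ^ p := by
  have h := NNReal.add_rpow_le_rpow_add (Real.toNNReal x) (Real.toNNReal y) hp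
  have h2 := NNReal.coe_le_coe.mpr h
  simpa [NNReal.coe_rpow, Real.coe_toNNReal x hx, Real.coe_toNNReal y hy,
    ← Real.toNNReal_add hx hy, Real.coe_toNNReal _ (add_nonneg hx hy)] using h2

lemma auxF (p : ℝ) (hp : 2 ≤ p) (m : ℝ) (hm : 0 ≤ m) {d : ℝ} (hd : 0 ≤ d) :
    m ^ p + d ^ p + p * m ^ (p - 1) * d ≤ (m + d) ^ p := by
  have hp1 : (1:ℝ) ≤ p := by linarith
  have hderiv : ∀ x : ℝ, HasDerivAt (fun x => (m + x) ^ p - x ^ p - p * m ^ (p-1) * x)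
      (p * (m + x) ^ (p-1) - p * x ^ (p-1) - p * m ^ (p-1)) x := by
    intro x
    have h1 : HasDerivAt (fun x : ℝ => (m + x) ^ p) (p * (m + x) ^ (p-1)) x := by
      have := (Real.hasDerivAt_rpow_const (x := m + x) (p := p) (Or.inr hp1)).comp x
        ((hasDerivAt_id x).const_add m)
      simpa [Function.comp_def] using this
    have h2 : HasDerivAt (fun x : ℝ => x ^ p) (p * x ^ (p-1)) x :=
      Real.hasDerivAt_rpow_const (Or.inr hp1)
    have h3 : HasDerivAt (fun x : ℝ => p * m ^ (p-1) * x) (p * m ^ (p-1)) x := by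
      simpa using (hasDerivAt_id x).const_mul (p * m ^ (p-1))
    exact (h1.sub h2).sub h3
  have key : MonotoneOn (fun x => (m + x) ^ p - x ^ p - p * m ^ (p-1) * x) (Set.Ici 0) := by
    apply monotoneOn_of_deriv_nonneg (convex_Ici 0)
    · exact Continuous.continuousOn
        (Differentiable.continuous (fun x => (hderiv x).differentiableAt))
    · intro x _
      exact (hderiv x).differentiableAt.differentiableWithinAt
    · intro x hx
      rw [(hderiv x).deriv]
      simp only [interior_Ici, Set.mem_Ioi] at hx
      have hsum : x ^ (p-1) + m ^ (p-1) ≤ (m + x) ^ (p-1) := by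
        have := auxSup hx.le hm (by linarith : 1 ≤ p - 1)
        rw [add_comm m x]; exact this
      nlinarith [hsum, hp1]
  have h0 := key (Set.self_mem_Ici) (Set.mem_Ici.mpr hd) hd
  simp only [add_zero, mul_zero, sub_zero] at h0
  rw [Real.zero_rpow (by linarith : p ≠ 0)] at h0
  linarith

lemma auxG (p : ℝ) (hp : 2 ≤ p) (m : ℝ) (hm : 0 ≤ m) {d : ℝ} (hd : 0 ≤ d) (hdm : d ≤ m) :
    m ^ p + d ^ p - p * m ^ (p - 1) * d ≤ (m - d) ^ p := by
  have hp1 : (1:ℝ) ≤ p := by linarith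
  have hderiv : ∀ x : ℝ, HasDerivAt (fun x => (m - x) ^ p - x ^ p + p * m ^ (p-1) * x)
      (-(p * (m - x) ^ (p-1)) - p * x ^ (p-1) + p * m ^ (p-1)) x := by
    intro x
    have h1 : HasDerivAt (fun x : ℝ => (m - x) ^ p) (-(p * (m - x) ^ (p-1))) x := by
      have := (Real.hasDerivAt_rpow_const (x := m - x) (p := p) (Or.inr hp1)).comp x
        ((hasDerivAt_id x).const_sub m)
      simpa [Function.comp_def] using this
    have h2 : HasDerivAt (fun x : ℝ => x ^ p) (p * x ^ (p-1)) x :=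
      Real.hasDerivAt_rpow_const (Or.inr hp1)
    have h3 : HasDerivAt (fun x : ℝ => p * m ^ (p-1) * x) (p * m ^ (p-1)) x := by
      simpa using (hasDerivAt_id x).const_mul (p * m ^ (p-1))
    exact (h1.sub h2).add h3
  have key : MonotoneOn (fun x => (m - x) ^ p - x ^ p + p * m ^ (p-1) * x) (Set.Icc 0 m) := by
    apply monotoneOn_of_deriv_nonneg (convex_Icc 0 m)
    · exact Continuous.continuousOn
        (Differentiable.continuous (fun x => (hderiv x).differentiableAt))
    · intro x _
      exact (hderiv x).differentiableAt.differentiableWithinAt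
    · intro x hx
      rw [(hderiv x).deriv]
      rw [interior_Icc, Set.mem_Ioo] at hx
      have hsum : (m - x) ^ (p-1) + x ^ (p-1) ≤ m ^ (p-1) := by
        have := auxSup (by linarith : (0:ℝ) ≤ m - x) hx.1.le (by linarith : 1 ≤ p - 1)
        simpa using this
      nlinarith [hsum, hp1]
  have h0 := key (Set.left_mem_Icc.mpr hm) (Set.mem_Icc.mpr ⟨hd, hdm⟩) hd
  simp only [sub_zero, mul_zero, add_zero] at h0
  rw [Real.zero_rpow (by linarith : p ≠ 0)] at h0
  linarith

theorem stmt16 (p : ℝ) (hp : 2 ≤ p) (n : ℕ) (hn : 1 ≤ n)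
    (a : Fin n → ℝ) (ha : ∀ k, 0 < a k) :
    ((1 / (n : ℝ)) * ∑ k, a k) ^ p ≤
      (1 / (n : ℝ)) * ∑ k, (a k) ^ p
        - (1 / (n : ℝ)) * ∑ k, |a k - (1 / (n : ℝ)) * ∑ j, a j| ^ p := by
  have hn0 : (0:ℝ) < n := by exact_mod_cast hn
  have hne : (n:ℝ) ≠ 0 := hn0.ne'
  set m : ℝ := (1 / (n : ℝ)) * ∑ j, a j with hm
  have hmpos : 0 ≤ m := by
    apply mul_nonneg (by positivity)
    exact Finset.sum_nonneg fun k _ => (ha k).le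
  have hpt : ∀ k : Fin n, m ^ p + |a k - m| ^ p + p * m ^ (p-1) * (a k - m) ≤ (a k) ^ p := by
    intro k
    rcases le_or_gt m (a k) with h | h
    · have h2 := auxF p hp m hmpos (d := a k - m) (by linarith)
      rw [show m + (a k - m) = a k from by ring] at h2
      rw [abs_of_nonneg (by linarith : (0:ℝ) ≤ a k - m)]
      linarith
    · have h2 := auxG p hp m hmpos (d := m - a k) (by linarith) (by linarith [(ha k).le])
      rw [show m - (m - a k) = a k from by ring] at h2
      rw [abs_of_neg (by linarith : a k - m < 0), show -(a k - m) = m - a k from by ring]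
      linarith
  have hsum : (n : ℝ) * m ^ p + (∑ k, |a k - m| ^ p) ≤ ∑ k, (a k) ^ p := by
    have h1 := Finset.sum_le_sum (fun k (_ : k ∈ Finset.univ) => hpt k)
    rw [Finset.sum_add_distrib, Finset.sum_add_distrib] at h1
    have h2 : ∑ _k : Fin n, m ^ p = (n : ℝ) * m ^ p := by
      rw [Finset.sum_const]; simp [mul_comm]
    have h3 : ∑ k, p * m ^ (p-1) * (a k - m) = 0 := by
      rw [← Finset.mul_sum, Finset.sum_sub_distrib]
      have e1 : ∑ _k : Fin n, m = (n:ℝ) * m := by rw [Finset.sum_const]; simp [mul_comm]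
      have e2 : ∑ k, a k = (n:ℝ) * m := by rw [hm]; field_simp
      rw [e1, e2]
      ring
    rw [h2, h3] at h1
    linarith
  have h4 : (n:ℝ) * m ^ p ≤ (∑ k, (a k) ^ p) - ∑ k, |a k - m| ^ p := by linarith
  calc m ^ p = (1/(n:ℝ)) * ((n:ℝ) * m ^ p) := by field_simp
    _ ≤ (1/(n:ℝ)) * ((∑ k, (a k) ^ p) - ∑ k, |a k - m| ^ p) :=
        mul_le_mul_of_nonneg_left h4 (by positivity)
    _ = (1/(n:ℝ)) * ∑ k, (a k) ^ p - (1/(n:ℝ)) * ∑ k, |a k - m| ^ p := by ring
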